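/- Sandwich argument for pair correlations: let (R_N)_N be functions of s > 0 of the form R_N(s) = (1/N)·#{1 ≤ i ≠ j ≤ N : ‖x_i − x_j‖ ≤ s/N} for a fixed sequence (x_n) in [0,1]. If (N_m) is an increasing sequence of integers with N_{m+1}/N_m → 1 and R_{N_m}(s) → 2s as m → ∞ for every rational s > 0, then R_N(s) → 2s as N → ∞ for every real s > 0. -/

import Mathlib

open Filter

/-- Distance to the nearest integer. -/
noncomputable def distNearestInt (x : ℝ) : ℝ := |x - (round x : ℤ)|

/-- The pair correlation function
`R_N(s) = (1/N)·#{1 ≤ i ≠ j ≤ N : ‖x_i − x_j‖ ≤ s/N}`. -/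
noncomputable def pairCorr (x : ℕ → ℝ) (N : ℕ) (s : ℝ) : ℝ :=
  (1 / (N : ℝ)) *
    ((((Finset.Icc 1 N) ×ˢ (Finset.Icc 1 N)).filter fun p =>
      p.1 ≠ p.2 ∧ distNearestInt (x p.1 - x p.2) ≤ s / (N : ℝ)).card : ℝ)

/-- Counting function with an absolute threshold. -/
noncomputable def pcCount (x : ℕ → ℝ) (N : ℕ) (t : ℝ) : ℕ :=
  (((Finset.Icc 1 N) ×ˢ (Finset.Icc 1 N)).filter fun p =>
      p.1 ≠ p.2 ∧ distNearestInt (x p.1 - x p.2) ≤ t).card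

lemma pairCorr_eq (x : ℕ → ℝ) (N : ℕ) (s : ℝ) :
    pairCorr x N s = (1 / (N : ℝ)) * pcCount x N (s / N) := rfl

lemma pcCount_mono (x : ℕ → ℝ) {N N' : ℕ} {t t' : ℝ} (hN : N ≤ N') (ht : t ≤ t') :
    pcCount x N t ≤ pcCount x N' t' := by
  apply Finset.card_le_card
  intro p hp
  simp only [Finset.mem_filter, Finset.mem_product, Finset.mem_Icc] at *
  exact ⟨⟨⟨hp.1.1.1, hp.1.1.2.trans hN⟩, ⟨hp.1.2.1, hp.1.2.2.trans hN⟩⟩,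
    hp.2.1, hp.2.2.trans ht⟩

lemma pairCorr_upper (x : ℕ → ℝ) {N M M' : ℕ} (hM : 1 ≤ M) (hMN : M ≤ N)
    (hNM' : N ≤ M') {s q : ℝ} (hq : s * M' ≤ q * M) (hq0 : 0 ≤ q) :
    pairCorr x N s ≤ ((M' : ℝ) / M) * pairCorr x M' q := by
  have hM0 : (0 : ℝ) < M := by exact_mod_cast hM
  have hN0 : (0 : ℝ) < N := by exact_mod_cast hM.trans hMN
  have hM'0 : (0 : ℝ) < M' := hN0.trans_le (by exact_mod_cast hNM')
  have hMNc : (M : ℝ) ≤ N := by exact_mod_cast hMN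
  have h1 : s / N ≤ q / M' := by
    rw [div_le_div_iff₀ hN0 hM'0]
    nlinarith [mul_le_mul_of_nonneg_left hMNc hq0]
  have key : (1 / (N : ℝ)) * pcCount x N (s / N)
      ≤ (1 / (M : ℝ)) * pcCount x M' (q / M') := by
    apply mul_le_mul (one_div_le_one_div_of_le hM0 hMNc)
      (by exact_mod_cast pcCount_mono x hNM' h1) (by positivity) (by positivity)
  rw [pairCorr_eq, pairCorr_eq]
  calc (1 / (N : ℝ)) * pcCount x N (s / N)
      ≤ (1 / (M : ℝ)) * pcCount x M' (q / M') := key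
    _ = ((M' : ℝ) / M) * ((1 / (M' : ℝ)) * pcCount x M' (q / M')) := by
        field_simp
  
lemma pairCorr_lower (x : ℕ → ℝ) {N M M' : ℕ} (hM : 1 ≤ M) (hMN : M ≤ N)
    (hNM' : N ≤ M') {s q : ℝ} (hq : q * M' ≤ s * M) (hq0 : 0 ≤ q) :
    ((M : ℝ) / M') * pairCorr x M q ≤ pairCorr x N s := by
  have hM0 : (0 : ℝ) < M := by exact_mod_cast hM
  have hN0 : (0 : ℝ) < N := by exact_mod_cast hM.trans hMN
  have hM'0 : (0 : ℝ) < M' := hN0.trans_le (by exact_mod_cast hNM')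
  have hNM'c : (N : ℝ) ≤ M' := by exact_mod_cast hNM'
  have h1 : q / M ≤ s / N := by
    rw [div_le_div_iff₀ hM0 hN0]
    nlinarith [mul_le_mul_of_nonneg_left hNM'c hq0]
  have key : (1 / (M' : ℝ)) * pcCount x M (q / M)
      ≤ (1 / (N : ℝ)) * pcCount x N (s / N) := by
    apply mul_le_mul (one_div_le_one_div_of_le hN0 hNM'c)
      (by exact_mod_cast pcCount_mono x hMN h1) (by positivity) (by positivity)
  rw [pairCorr_eq, pairCorr_eq]
  calc ((M : ℝ) / M') * ((1 / (M : ℝ)) * pcCount x M (q / M))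
      = (1 / (M' : ℝ)) * pcCount x M (q / M) := by field_simp
    _ ≤ (1 / (N : ℝ)) * pcCount x N (s / N) := key

/-- Sandwich argument: if `(N_m)` is increasing with `N_{m+1}/N_m → 1` and
`R_{N_m}(s) → 2s` for all rational `s > 0`, then `R_N(s) → 2s` for all real `s > 0`. -/
theorem pair_corr_sandwich (x : ℕ → ℝ) (hx : ∀ n, x n ∈ Set.Icc (0 : ℝ) 1)
    (Nm : ℕ → ℕ) (hNm : StrictMono Nm) (hpos : ∀ m, 1 ≤ Nm m)
    (hratio : Tendsto (fun m => (Nm (m + 1) : ℝ) / (Nm m : ℝ)) atTop (nhds 1))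
    (hconv : ∀ s : ℚ, 0 < s →
      Tendsto (fun m => pairCorr x (Nm m) (s : ℝ)) atTop (nhds (2 * (s : ℝ)))) :
    ∀ s : ℝ, 0 < s → Tendsto (fun N => pairCorr x N s) atTop (nhds (2 * s)) := by
  intro s hs
  -- index function: largest m with Nm m ≤ N
  set mI : ℕ → ℕ := fun N => Nat.findGreatest (fun m => Nm m ≤ N) N with hmI
  have hA : ∀ N, Nm 0 ≤ N → Nm (mI N) ≤ N := by
    intro N h
    exact Nat.findGreatest_spec (P := fun m => Nm m ≤ N) (Nat.zero_le N) h
  have hB : ∀ N, N < Nm (mI N + 1) := by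
    intro N
    by_cases h : mI N + 1 ≤ N
    · exact Nat.lt_of_not_le
        (Nat.findGreatest_is_greatest (P := fun m => Nm m ≤ N) (Nat.lt_succ_self _) h)
    · have h1 : mI N ≤ N := Nat.findGreatest_le N
      have h2 : mI N = N := by omega
      have h3 : N + 1 ≤ Nm (N + 1) := hNm.le_apply
      rw [h2]
      omega
  have hmItend : Tendsto mI atTop atTop := by
    apply tendsto_atTop_atTop.2
    intro b
    exact ⟨Nm b, fun N hN => Nat.le_findGreatest (le_trans hNm.le_apply hN) hN⟩
  have hratioinv : Tendsto (fun m => (Nm m : ℝ) / (Nm (m + 1) : ℝ)) atTop (nhds 1) := by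
    have := hratio.inv₀ one_ne_zero
    simpa only [inv_div, inv_one] using this
  rw [Metric.tendsto_nhds]
  intro ε hε
  -- choose rationals q₁ < s < q₂
  obtain ⟨q₂, hq₂s, hq₂u⟩ := exists_rat_btwn (show s < s + ε / 4 by linarith)
  obtain ⟨q₁, hq₁l, hq₁s⟩ := exists_rat_btwn
    (show max (s - ε / 4) (s / 2) < s by
      apply max_lt <;> linarith)
  have hq₁pos : (0 : ℝ) < q₁ := lt_trans (by linarith [le_max_right (s - ε/4) (s/2)]) hq₁l
  have hq₂pos : (0 : ℝ) < q₂ := hs.trans hq₂s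
  have hq₁l' : s - ε / 4 < q₁ := lt_of_le_of_lt (le_max_left _ _) hq₁l
  have hc1 := hconv q₁ (by exact_mod_cast hq₁pos)
  have hc2 := hconv q₂ (by exact_mod_cast hq₂pos)
  have hc2' : Tendsto (fun m => pairCorr x (Nm (m + 1)) (q₂ : ℝ)) atTop
      (nhds (2 * (q₂ : ℝ))) := hc2.comp (tendsto_add_atTop_nat 1)
  have hLf : Tendsto (fun m => ((Nm m : ℝ) / (Nm (m + 1) : ℝ)) * pairCorr x (Nm m) (q₁ : ℝ))
      atTop (nhds (2 * (q₁ : ℝ))) := by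
    simpa using hratioinv.mul hc1
  have hUf : Tendsto (fun m => ((Nm (m + 1) : ℝ) / (Nm m : ℝ)) * pairCorr x (Nm (m + 1)) (q₂ : ℝ))
      atTop (nhds (2 * (q₂ : ℝ))) := by
    simpa using hratio.mul hc2'
  -- eventual ratio conditions
  have hcond2 : ∀ᶠ m in atTop, s * Nm (m + 1) ≤ (q₂ : ℝ) * Nm m := by
    have h12 : (1 : ℝ) < (q₂ : ℝ) / s := (one_lt_div hs).2 hq₂s
    filter_upwards [hratio.eventually_lt_const h12] with m hm
    have hm0 : (0 : ℝ) < Nm m := by exact_mod_cast hpos m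
    rw [div_lt_div_iff₀ hm0 hs] at hm
    linarith
  have hcond1 : ∀ᶠ m in atTop, (q₁ : ℝ) * Nm (m + 1) ≤ s * Nm m := by
    have h12 : (1 : ℝ) < s / (q₁ : ℝ) := (one_lt_div hq₁pos).2 hq₁s
    filter_upwards [hratio.eventually_lt_const h12] with m hm
    have hm0 : (0 : ℝ) < Nm m := by exact_mod_cast hpos m
    rw [div_lt_div_iff₀ hm0 hq₁pos] at hm
    linarith
  have hL : ∀ᶠ m in atTop,
      2 * s - ε < ((Nm m : ℝ) / (Nm (m + 1) : ℝ)) * pairCorr x (Nm m) (q₁ : ℝ) :=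
    hLf.eventually_const_lt (by linarith)
  have hU : ∀ᶠ m in atTop,
      ((Nm (m + 1) : ℝ) / (Nm m : ℝ)) * pairCorr x (Nm (m + 1)) (q₂ : ℝ) < 2 * s + ε :=
    hUf.eventually_lt_const (by linarith)
  obtain ⟨M₀, hM₀⟩ := eventually_atTop.mp (hcond1.and (hcond2.and (hL.and hU)))
  filter_upwards [hmItend.eventually_ge_atTop M₀, eventually_ge_atTop (Nm 0)]
    with N hN1 hN2
  obtain ⟨p1, p2, p3, p4⟩ := hM₀ (mI N) hN1
  set m := mI N
  have hNl : Nm m ≤ N := hA N hN2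
  have hNu : N ≤ Nm (m + 1) := (hB N).le
  have hlow := pairCorr_lower x (hpos m) hNl hNu p1 hq₁pos.le
  have hup := pairCorr_upper x (hpos m) hNl hNu p2 hq₂pos.le
  rw [Real.dist_eq, abs_lt]
  constructor <;> linarith
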